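/- Let n ≥ 2 be an integer and c ∈ ℂ with Im(c) ≠ 0, |c| > 1, |c+1| ≤ √(n+1), and |c−1| ≤ √(n+1). Let R(c,n) be the closed solid rectangle with vertices ψ(c,n), conj(ψ(c,n)), −ψ(c,n), −conj(ψ(c,n)), where ψ(c,n) := c(n+1)/(1+c) if Re(c) ≥ 0 and ψ(c,n) := c(n+1)/(1−c) if Re(c) < 0. Then R(c,n) ⊂ ⋃_{t ∈ A_n} (t + c^{-1}·R(c,n)). -/

import Mathlib

/-- `A n = {-n+1, -n+3, ..., n-1} ⊂ ℂ`. -/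
def Acoef (n : ℕ) : Set ℂ := {x | ∃ k : ℕ, k < n ∧ x = (n : ℂ) - 1 - 2 * k}

/-- The collinear fractal `E(c,n)`. -/
def E (c : ℂ) (n : ℕ) : Set ℂ :=
  {z | ∃ a : ℕ → ℂ, (∀ k, a k ∈ Acoef n) ∧ HasSum (fun k => a k / c ^ k) z}

/-- The vertex `ψ(c,n)` of the rectangle `R(c,n)`. -/
noncomputable def psi (c : ℂ) (n : ℕ) : ℂ :=
  if 0 ≤ c.re then c * (n + 1) / (1 + c) else c * (n + 1) / (1 - c)

/-- The closed solid axis-parallel rectangle centered at `0` with vertices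
`±ψ(c,n)`, `±conj(ψ(c,n))`. -/
noncomputable def R (c : ℂ) (n : ℕ) : Set ℂ :=
  {z | |z.re| ≤ |(psi c n).re| ∧ |z.im| ≤ |(psi c n).im|}

/-- Selection lemma: some element of `{n-1-2k : 0 ≤ k < n}` lies within `ρ ≥ 1` of
any `r` with `|r| ≤ n + 1 - ρ`. -/
lemma core_select (n : ℕ) (hn : 1 ≤ n) (r ρ : ℝ) (hρ : 1 ≤ ρ)
    (hr : |r| ≤ (n : ℝ) + 1 - ρ) :
    ∃ k : ℕ, k < n ∧ |r - ((n : ℝ) - 1 - 2 * k)| ≤ ρ := by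
  obtain ⟨hr1, hr2⟩ := abs_le.mp hr
  have hn1 : (1:ℝ) ≤ (n:ℝ) := by exact_mod_cast hn
  by_cases hbig : (n:ℝ) - 2 < r
  · refine ⟨0, hn, abs_le.mpr ⟨by push_cast; linarith, by push_cast; linarith⟩⟩
  · by_cases hsmall : r < -((n:ℝ) - 2)
    · refine ⟨n - 1, Nat.sub_lt hn one_pos, ?_⟩
      have hcast : ((n - 1 : ℕ) : ℝ) = (n : ℝ) - 1 := by
        push_cast [Nat.cast_sub hn]; ring
      rw [hcast]
      exact abs_le.mpr ⟨by linarith, by linarith⟩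
    · push_neg at hbig hsmall
      set j : ℤ := ⌊((n : ℝ) - r) / 2⌋ with hj
      have hj0 : 0 ≤ j := Int.le_floor.mpr (by push_cast; linarith)
      have hjle : (j : ℝ) ≤ ((n : ℝ) - r) / 2 := Int.floor_le _
      have hjgt : ((n : ℝ) - r) / 2 - 1 < (j : ℝ) := Int.sub_one_lt_floor _
      refine ⟨j.toNat, ?_, ?_⟩
      · have : (j : ℝ) ≤ (n : ℝ) - 1 := by linarith
        have : j ≤ (n : ℤ) - 1 := by exact_mod_cast this
        omega
      · have hcast : ((j.toNat : ℕ) : ℝ) = (j : ℝ) := by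
          exact_mod_cast Int.toNat_of_nonneg hj0
        rw [hcast]
        exact abs_le.mpr ⟨by linarith, by linarith⟩

/-- The covering property in the case `0 ≤ Re c`. -/
lemma main_cov (n : ℕ) (hn : 2 ≤ n) (c : ℂ) (hre : 0 ≤ c.re) (hIm : c.im ≠ 0)
    (hDN : (1 + c.re)^2 + c.im^2 ≤ (n:ℝ) + 1) :
    R c n ⊆ ⋃ t ∈ Acoef n, (fun z => t + c⁻¹ * z) '' R c n := by
  set a := c.re with ha
  set b := c.im with hb
  set N : ℝ := (n:ℝ) + 1 with hN
  set D : ℝ := (1 + a)^2 + b^2 with hD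
  have hb0 : 0 < |b| := abs_pos.mpr hIm
  have hD0 : 0 < D := by nlinarith [sq_nonneg (1+a), mul_self_pos.mpr hIm, sq_abs b]
  have hN0 : (0:ℝ) < N := by positivity
  have hρ1 : 1 ≤ N / D := (one_le_div hD0).mpr hDN
  have hc0 : c ≠ 0 := fun h => hIm (by simp [hb, h])
  have hS : ((1 + a) * (1 + a) + (0 + b) * (0 + b)) ≠ 0 := by
    nlinarith [sq_nonneg (1 + a), mul_self_pos.mpr hIm]
  have hpre : (psi c n).re = N * (a + a^2 + b^2) / D := by
    rw [psi, if_pos hre, Complex.div_re]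
    simp only [Complex.normSq_apply, Complex.mul_re, Complex.mul_im, Complex.add_re,
      Complex.add_im, Complex.one_re, Complex.one_im, Complex.natCast_re, Complex.natCast_im]
    rw [← add_div, div_eq_div_iff hS hD0.ne']
    ring
  have hpim : (psi c n).im = N * b / D := by
    rw [psi, if_pos hre, Complex.div_im]
    simp only [Complex.normSq_apply, Complex.mul_re, Complex.mul_im, Complex.add_re,
      Complex.add_im, Complex.one_re, Complex.one_im, Complex.natCast_re, Complex.natCast_im]
    rw [div_sub_div_same, div_eq_div_iff hS hD0.ne']
    ring
  have habs_re : |(psi c n).re| = N * (a + a^2 + b^2) / D := by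
    rw [hpre]; exact abs_of_nonneg (by positivity)
  have habs_im : |(psi c n).im| = N * |b| / D := by
    rw [hpim, abs_div, abs_mul, abs_of_nonneg hN0.le, abs_of_nonneg hD0.le]
  intro z hz
  obtain ⟨hx, hy⟩ := hz
  rw [habs_re] at hx
  rw [habs_im] at hy
  set x := z.re with hxdef
  set y := z.im with hydef
  set r : ℝ := x + a * y / b with hr
  have hay : |a * y / b| = a * |y| / |b| := by
    rw [abs_div, abs_mul, abs_of_nonneg hre]
  have hrbd : |r| ≤ N - N / D := by
    have h1 : |r| ≤ |x| + a * |y| / |b| := by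
      rw [hr, ← hay]; exact abs_add_le _ _
    have h2 : a * |y| / |b| ≤ a * (N * |b| / D) / |b| := by gcongr
    have h3 : a * (N * |b| / D) / |b| = a * N / D := by
      field_simp
    have h4 : N * (a + a^2 + b^2) / D + a * N / D = N - N / D := by
      field_simp
      ring
    linarith
  obtain ⟨k, hk, hδ⟩ := core_select n (le_trans one_le_two hn) r (N / D) hρ1 hrbd
  set t : ℝ := (n : ℝ) - 1 - 2 * k with ht
  set δ : ℝ := r - t with hδdef
  set T : ℂ := (n : ℂ) - 1 - 2 * k with hT
  have hTre : T.re = t := by simp [hT, ht]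
  have hTim : T.im = 0 := by simp [hT]
  set w : ℂ := c * (z - T) with hw
  have hwre : w.re = a * δ - (a^2 + b^2) * y / b := by
    rw [hw, Complex.mul_re, Complex.sub_re, Complex.sub_im, hTre, hTim]
    rw [hδdef, hr, ht]
    field_simp
    ring
  have hwim : w.im = b * δ := by
    rw [hw, Complex.mul_im, Complex.sub_re, Complex.sub_im, hTre, hTim]
    rw [hδdef, hr, ht]
    field_simp
    ring
  have hwmem : w ∈ R c n := by
    constructor
    · rw [habs_re, hwre]
      have e1 : |a * δ - (a^2+b^2) * y / b| ≤ a * |δ| + (a^2+b^2) * |y| / |b| := by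
        refine (abs_sub _ _).trans ?_
        rw [abs_mul, abs_of_nonneg hre, abs_div, abs_mul,
          abs_of_nonneg (by positivity : (0:ℝ) ≤ a^2+b^2)]
      have e2 : a * |δ| ≤ a * (N / D) := by gcongr
      have e3 : (a^2+b^2) * |y| / |b| ≤ (a^2+b^2) * (N * |b| / D) / |b| := by gcongr
      have e4 : (a^2+b^2) * (N * |b| / D) / |b| = (a^2+b^2) * N / D := by
        field_simp
      have e5 : a * (N / D) + (a^2+b^2) * N / D = N * (a + a^2 + b^2) / D := by
        field_simp; ring
      linarith
    · rw [habs_im, hwim, abs_mul]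
      have : |b| * |δ| ≤ |b| * (N / D) := by gcongr
      have e : |b| * (N / D) = N * |b| / D := by ring
      linarith
  refine Set.mem_iUnion₂.mpr ⟨T, ⟨k, hk, rfl⟩, w, hwmem, ?_⟩
  show T + c⁻¹ * w = z
  rw [hw, ← mul_assoc, inv_mul_cancel₀ hc0, one_mul]
  ring

theorem covering_property (n : ℕ) (hn : 2 ≤ n) (c : ℂ)
    (hIm : c.im ≠ 0) (hc : 1 < ‖c‖)
    (h1 : ‖c + 1‖ ≤ Real.sqrt (n + 1))
    (h2 : ‖c - 1‖ ≤ Real.sqrt (n + 1)) :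
    R c n ⊆ ⋃ t ∈ Acoef n, (fun z => t + c⁻¹ * z) '' R c n := by
  have hNnn : (0:ℝ) ≤ (n:ℝ) + 1 := by positivity
  rcases le_or_gt 0 c.re with hre | hre
  · -- squared form of h1
    have hsq : ‖c + 1‖ ^ 2 ≤ (n:ℝ) + 1 := by
      have := Real.sq_sqrt hNnn
      nlinarith [norm_nonneg (c + 1), Real.sqrt_nonneg ((n:ℝ) + 1)]
    have hDN : (1 + c.re)^2 + c.im^2 ≤ (n:ℝ) + 1 := by
      have hns := Complex.sq_norm (c + 1)
      rw [Complex.normSq_apply, Complex.add_re, Complex.add_im, Complex.one_re,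
        Complex.one_im] at hns
      nlinarith
    exact main_cov n hn c hre hIm hDN
  · -- apply the lemma to `-c` and use symmetry of `R`.
    have hre' : 0 ≤ (-c).re := by rw [Complex.neg_re]; linarith
    have hIm' : (-c).im ≠ 0 := by simpa using hIm
    have hsq : ‖c - 1‖ ^ 2 ≤ (n:ℝ) + 1 := by
      have := Real.sq_sqrt hNnn
      nlinarith [norm_nonneg (c - 1), Real.sqrt_nonneg ((n:ℝ) + 1)]
    have hDN : (1 + (-c).re)^2 + (-c).im^2 ≤ (n:ℝ) + 1 := by
      have hns := Complex.sq_norm (c - 1)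
      rw [Complex.normSq_apply, Complex.sub_re, Complex.sub_im, Complex.one_re,
        Complex.one_im] at hns
      rw [Complex.neg_re, Complex.neg_im]
      nlinarith
    have hpsineg : psi (-c) n = - psi c n := by
      rw [psi, psi, if_pos hre', if_neg (not_le.mpr hre)]
      have h1c : (1 : ℂ) + -c = 1 - c := by ring
      rw [h1c, neg_mul, neg_div]
    have hRneg : ∀ w : ℂ, w ∈ R (-c) n ↔ w ∈ R c n := by
      intro w
      simp [R, hpsineg]
    intro z hz
    have hz' : z ∈ R (-c) n := (hRneg z).mpr hz
    obtain ⟨T, hT, w, hw, hweq⟩ := Set.mem_iUnion₂.mp (main_cov n hn (-c) hre' hIm' hDN hz')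
    refine Set.mem_iUnion₂.mpr ⟨T, hT, -w, ?_, ?_⟩
    · have hw' := (hRneg w).mp hw
      exact ⟨by simpa using hw'.1, by simpa using hw'.2⟩
    · show T + c⁻¹ * (-w) = z
      have : T + (-c)⁻¹ * w = z := hweq
      rw [← this]
      field_simp
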